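/- Let G = (C, S, E) be a finite bipartite graph with C nonempty, w : C → ℤ>0 client weights, and A ⊆ E an assignment. Let ℓ = ⌈log₂ w(C)⌉, where w(C) = ∑_{c∈C} w(c). Then there exists a maximally-nested fractional (w, 2^i)-nested matching hierarchy (x_0, …, x_ℓ) on G such that x_ℓ(cs) = w(c) for every edge cs ∈ A and x_ℓ(e) = 0 for every edge e ∉ A. -/
import Mathlib


/-- Every assignment `A` admits a maximally-nested fractional
`(w, 2^i)`-nested matching hierarchy decomposition with `ℓ = ⌈log₂ w(C)⌉`. -/
theorem stmt_6 {C S : Type*} [Fintype C] [Fintype S] [DecidableEq C] [DecidableEq S]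
    [Nonempty C]
    (E : Finset (C × S)) (w : C → ℤ) (hw : ∀ c, 0 < w c)
    (A : Finset (C × S)) (hAE : A ⊆ E)
    (hA : ∀ c : C, ∃! e, e ∈ A ∧ e.1 = c)
    (ℓ : ℕ) (hℓ : (ℓ : ℤ) = ⌈Real.logb 2 (∑ c, (w c : ℝ))⌉) :
    ∃ x : ℕ → C × S → ℝ,
      (∀ i ≤ ℓ, ∀ e, 0 ≤ x i e) ∧
      (∀ i ≤ ℓ, ∀ c : C, ∑ e ∈ E.filter (fun e => e.1 = c), x i e ≤ (w c : ℝ)) ∧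
      (∀ i ≤ ℓ, ∀ s : S, ∑ e ∈ E.filter (fun e => e.2 = s), x i e ≤ 2 ^ i) ∧
      (∀ i, 1 ≤ i → i ≤ ℓ → ∀ e, x (i - 1) e ≤ x i e) ∧
      (∀ i < ℓ, ∀ s : S,
        (∑ e ∈ E.filter (fun e => e.2 = s), x (i + 1) e) ≠
            (∑ e ∈ E.filter (fun e => e.2 = s), x i e) →
          (∑ e ∈ E.filter (fun e => e.2 = s), x i e) = 2 ^ i) ∧
      (∀ e ∈ A, x ℓ e = (w e.1 : ℝ)) ∧
      (∀ e, e ∉ A → x ℓ e = 0) := by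
  classical
  set Wf : S → ℝ := fun s => ∑ e ∈ A.filter (fun e => e.2 = s), (w e.1 : ℝ) with hWfdef
  have hwr : ∀ c : C, (0:ℝ) < (w c : ℝ) := fun c => by exact_mod_cast hw c
  have hWf0 : ∀ s, 0 ≤ Wf s := fun s =>
    Finset.sum_nonneg (fun e _ => (hwr e.1).le)
  -- total weight
  have hsumA : ∑ e ∈ A, (w e.1 : ℝ) = ∑ c, (w c : ℝ) := by
    apply Finset.sum_bij (fun e (_ : e ∈ A) => e.1)
    · intro e _; exact Finset.mem_univ _
    · intro e1 h1 e2 h2 h12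
      obtain ⟨e0, _, hu⟩ := hA e1.1
      have h1' := hu e1 ⟨h1, rfl⟩
      have h2' := hu e2 ⟨h2, h12.symm⟩
      rw [h1', h2']
    · intro c _
      obtain ⟨e, he, _⟩ := hA c
      exact ⟨e, he.1, he.2⟩
    · intro e _; rfl
  have hWfle : ∀ s, Wf s ≤ ∑ c, (w c : ℝ) := by
    intro s
    rw [← hsumA]
    exact Finset.sum_le_sum_of_subset_of_nonneg (Finset.filter_subset _ _)
      (fun e _ _ => (hwr e.1).le)
  have hWpos : (0:ℝ) < ∑ c, (w c : ℝ) :=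
    Finset.sum_pos (fun c _ => hwr c) Finset.univ_nonempty
  have hWle2ℓ : (∑ c, (w c : ℝ)) ≤ 2 ^ ℓ := by
    have hlog : Real.logb 2 (∑ c, (w c : ℝ)) ≤ (ℓ : ℝ) := by
      have := Int.le_ceil (Real.logb 2 (∑ c, (w c : ℝ)))
      rw [← hℓ] at this
      exact_mod_cast this
    calc (∑ c, (w c : ℝ))
        = (2:ℝ) ^ Real.logb 2 (∑ c, (w c : ℝ)) :=
          (Real.rpow_logb two_pos (by norm_num) hWpos).symm
      _ ≤ (2:ℝ) ^ (ℓ:ℝ) := Real.rpow_le_rpow_of_exponent_le one_le_two hlog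
      _ = 2 ^ ℓ := Real.rpow_natCast 2 ℓ
  have hWfpos : ∀ e ∈ A, (w e.1 : ℝ) ≤ Wf e.2 := by
    intro e he
    have hm : e ∈ A.filter (fun e' => e'.2 = e.2) := Finset.mem_filter.2 ⟨he, rfl⟩
    show (w e.1 : ℝ) ≤ ∑ e' ∈ A.filter (fun e' => e'.2 = e.2), (w e'.1 : ℝ)
    exact Finset.single_le_sum (f := fun e' : C × S => (w e'.1 : ℝ))
      (fun e' _ => (hwr e'.1).le) hm
  -- server sums
  have hsrv : ∀ (i : ℕ) (s : S),
      ∑ e ∈ E.filter (fun e => e.2 = s),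
        (if e ∈ A then (w e.1 : ℝ) * min 1 (2 ^ i / Wf e.2) else 0)
      = min (Wf s) (2 ^ i) := by
    intro i s
    have h1 : ∑ e ∈ E.filter (fun e => e.2 = s),
          (if e ∈ A then (w e.1 : ℝ) * min 1 (2 ^ i / Wf e.2) else 0)
        = ∑ e ∈ A.filter (fun e => e.2 = s),
          (if e ∈ A then (w e.1 : ℝ) * min 1 (2 ^ i / Wf e.2) else 0) :=
      (Finset.sum_subset (Finset.filter_subset_filter _ hAE)
        (fun e he heA => if_neg (fun h => heA (Finset.mem_filter.2
          ⟨h, (Finset.mem_filter.1 he).2⟩)))).symm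
    have h2 : ∑ e ∈ A.filter (fun e => e.2 = s),
          (if e ∈ A then (w e.1 : ℝ) * min 1 (2 ^ i / Wf e.2) else 0)
        = ∑ e ∈ A.filter (fun e => e.2 = s), (w e.1 : ℝ) * min 1 (2 ^ i / Wf s) :=
      Finset.sum_congr rfl (fun e he => by
        obtain ⟨heA, hes⟩ := Finset.mem_filter.1 he
        rw [if_pos heA, hes])
    rw [h1, h2, ← Finset.sum_mul]
    show Wf s * min 1 (2 ^ i / Wf s) = min (Wf s) (2 ^ i)
    rcases eq_or_lt_of_le (hWf0 s) with h | h
    · rw [← h, zero_mul, min_eq_left (by positivity)]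
    · rcases le_total ((2:ℝ) ^ i) (Wf s) with hle | hle
      · rw [min_eq_right hle, min_eq_right (by
          rw [div_le_one h]; exact hle), mul_div_cancel₀ _ h.ne']
      · rw [min_eq_left hle, min_eq_left (by
          rw [le_div_iff₀ h, one_mul]; exact hle), mul_one]
  -- the construction
  refine ⟨fun i e => if e ∈ A then (w e.1 : ℝ) * min 1 (2 ^ i / Wf e.2) else 0,
    ?_, ?_, ?_, ?_, ?_, ?_, ?_⟩
  · intro i _ e
    dsimp only
    split
    · exact mul_nonneg (hwr e.1).le (le_min zero_le_one
        (div_nonneg (by positivity) (hWf0 e.2)))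
    · exact le_refl 0
  · intro i _ c
    obtain ⟨e0, ⟨he0A, he0c⟩, hu⟩ := hA c
    have hsub : A.filter (fun e => e.1 = c) ⊆ E.filter (fun e => e.1 = c) :=
      Finset.filter_subset_filter _ hAE
    have h1 : ∑ e ∈ E.filter (fun e => e.1 = c),
          (if e ∈ A then (w e.1 : ℝ) * min 1 (2 ^ i / Wf e.2) else 0)
        = ∑ e ∈ A.filter (fun e => e.1 = c),
          (if e ∈ A then (w e.1 : ℝ) * min 1 (2 ^ i / Wf e.2) else 0) :=
      (Finset.sum_subset hsub (fun e he heA => if_neg (fun h => heA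
        (Finset.mem_filter.2 ⟨h, (Finset.mem_filter.1 he).2⟩)))).symm
    rw [h1]
    have hsing : A.filter (fun e => e.1 = c) = {e0} := by
      ext e
      simp only [Finset.mem_filter, Finset.mem_singleton]
      constructor
      · intro ⟨h1, h2⟩; exact hu e ⟨h1, h2⟩
      · rintro rfl; exact ⟨he0A, he0c⟩
    rw [hsing, Finset.sum_singleton, if_pos he0A, he0c]
    calc (w c : ℝ) * min 1 (2 ^ i / Wf e0.2) ≤ (w c : ℝ) * 1 :=
          mul_le_mul_of_nonneg_left (min_le_left _ _) (hwr c).le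
      _ = (w c : ℝ) := mul_one _
  · intro i _ s
    rw [hsrv i s]
    exact min_le_right _ _
  · intro i hi _ e
    dsimp only
    split
    · refine mul_le_mul_of_nonneg_left (min_le_min le_rfl ?_) (hwr e.1).le
      rw [div_eq_mul_inv, div_eq_mul_inv]
      exact mul_le_mul_of_nonneg_right
        (pow_le_pow_right₀ one_le_two (Nat.sub_le i 1)) (inv_nonneg.2 (hWf0 e.2))
    · exact le_refl 0
  · intro i _ s hne
    rw [hsrv (i + 1) s, hsrv i s] at hne
    rw [hsrv i s]
    rcases le_total (Wf s) ((2:ℝ) ^ i) with hle | hle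
    · exfalso
      apply hne
      rw [min_eq_left hle, min_eq_left (hle.trans (pow_le_pow_right₀ one_le_two (by omega)))]
    · rw [min_eq_right hle]
  · intro e he
    dsimp only
    rw [if_pos he]
    have h1 : (1:ℝ) ≤ 2 ^ ℓ / Wf e.2 := by
      rw [le_div_iff₀ (lt_of_lt_of_le (hwr e.1) (hWfpos e he)), one_mul]
      exact (hWfle e.2).trans hWle2ℓ
    rw [min_eq_left h1, mul_one]
  · intro e he
    dsimp only
    rw [if_neg he]
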